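/- Let R ⊆ A be an ℝ-subalgebra which is itself a Noetherian integral domain in which ℝ is algebraically closed, and let T = ℂ ⊗_ℝ R, viewed as a subring of B. Let M = {ω·a : ω ∈ B*, a ∈ A, a ≠ 0}. Then the map φ : Π(R) → Π(A) sending the class [f]_R of a nonzero f ∈ T to its class [f]_A is a well-defined group homomorphism, and the kernel of φ is the subgroup ⟨M ∩ T⟩_R of Π(R) generated by the classes [g]_R for g ∈ M ∩ T. -/

import Mathlib

/-- The subgroup `C* · Frac(D)*` of `Frac(C)*`, for a subring `D` of a domain `C`. -/
noncomputable def polarN (C : Type) [CommRing C] [IsDomain C] (D : Subring C) :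
    Subgroup (FractionRing C)ˣ :=
  Subgroup.closure {u : (FractionRing C)ˣ |
    (∃ b : Cˣ, (u : FractionRing C) = algebraMap C (FractionRing C) (b : C)) ∨
    (∃ a : D, (u : FractionRing C) = algebraMap C (FractionRing C) (a : C))}

/-- The class `[f]` of a nonzero `f ∈ C` in the polar group `Frac(C)*/(C*·Frac(D)*)`. -/
noncomputable def polarCls (C : Type) [CommRing C] [IsDomain C] (D : Subring C)
    (f : C) (hf : f ≠ 0) : (FractionRing C)ˣ ⧸ polarN C D :=
  QuotientGroup.mk (Units.mk0 (algebraMap C (FractionRing C) f)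
    (by rwa [Ne, IsFractionRing.to_map_eq_zero_iff]))

section Aux
variable {C C' : Type} [CommRing C] [IsDomain C] [CommRing C'] [IsDomain C']

/-- lift of an injective ring hom to fraction fields -/
noncomputable def fracLift (f : C →+* C') (hf : Function.Injective f) :
    FractionRing C →+* FractionRing C' :=
  IsFractionRing.lift (g := (algebraMap C' (FractionRing C')).comp f)
    ((IsFractionRing.injective C' (FractionRing C')).comp hf)

lemma fracLift_algebraMap (f : C →+* C') (hf : Function.Injective f) (x : C) :
    fracLift f hf (algebraMap C (FractionRing C) x) = algebraMap C' (FractionRing C') (f x) :=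
  IsFractionRing.lift_algebraMap _ x

lemma polarN_map_le (f : C →+* C') (hf : Function.Injective f)
    (D : Subring C) (D' : Subring C') (hD : ∀ d : D, f d ∈ D') :
    ∀ u ∈ polarN C D, Units.map (fracLift f hf).toMonoidHom u ∈ polarN C' D' := by
  intro u hu
  refine Subgroup.closure_induction ?_ ?_ ?_ ?_ hu
  · rintro x (⟨b, hb⟩ | ⟨a, ha⟩) <;> apply Subgroup.subset_closure
    · left
      refine ⟨Units.map f.toMonoidHom b, ?_⟩
      show fracLift f hf (x : FractionRing C) = _
      rw [hb, fracLift_algebraMap]; rfl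
    · right
      refine ⟨⟨f (a : C), hD a⟩, ?_⟩
      show fracLift f hf (x : FractionRing C) = _
      rw [ha, fracLift_algebraMap]
  · simpa using (polarN C' D').one_mem
  · intro x y _ _ hx hy; rw [map_mul]; exact mul_mem hx hy
  · intro x _ hx; rw [map_inv]; exact inv_mem hx

/-- the induced homomorphism on polar groups -/
noncomputable def polarMap (f : C →+* C') (hf : Function.Injective f)
    (D : Subring C) (D' : Subring C') (hD : ∀ d : D, f d ∈ D') :
    ((FractionRing C)ˣ ⧸ polarN C D) →* ((FractionRing C')ˣ ⧸ polarN C' D') :=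
  QuotientGroup.lift _
    ((QuotientGroup.mk' (polarN C' D')).comp (Units.map (fracLift f hf).toMonoidHom))
    (by
      intro u hu
      simp only [MonoidHom.mem_ker, MonoidHom.comp_apply, QuotientGroup.mk'_apply,
        QuotientGroup.eq_one_iff]
      exact polarN_map_le f hf D D' hD u hu)

lemma polarMap_cls (f : C →+* C') (hf : Function.Injective f)
    (D : Subring C) (D' : Subring C') (hD : ∀ d : D, f d ∈ D') (x : C) (hx : x ≠ 0) :
    polarMap f hf D D' hD (polarCls C D x hx) =
      polarCls C' D' (f x) (by simpa [map_eq_zero_iff f hf] using hx) := by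
  unfold polarMap polarCls
  rw [QuotientGroup.lift_mk]
  simp only [MonoidHom.comp_apply, QuotientGroup.mk'_apply]
  congr 1
  exact Units.ext (fracLift_algebraMap f hf x)

lemma polarCls_mul (D : Subring C) (x y : C) (hx : x ≠ 0) (hy : y ≠ 0) :
    polarCls C D (x * y) (mul_ne_zero hx hy) = polarCls C D x hx * polarCls C D y hy := by
  unfold polarCls
  rw [← QuotientGroup.mk_mul]
  congr 1
  exact Units.ext (by simp [map_mul])

lemma polarCls_eq_one (D : Subring C) (x : C) (hx : x ≠ 0) (hxD : x ∈ D) :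
    polarCls C D x hx = 1 := by
  unfold polarCls
  rw [QuotientGroup.eq_one_iff]
  exact Subgroup.subset_closure (Or.inr ⟨⟨x, hxD⟩, rfl⟩)

lemma polarCls_inv (D : Subring C) (x y : C) (hx : x ≠ 0) (hy : y ≠ 0)
    (hxy : x * y ∈ D) : (polarCls C D x hx)⁻¹ = polarCls C D y hy := by
  have h := polarCls_mul D x y hx hy
  rw [polarCls_eq_one D (x * y) (mul_ne_zero hx hy) hxy] at h
  exact inv_eq_of_mul_eq_one_right h.symm

lemma polarN_mem_char (D : Subring C) (v : (FractionRing C)ˣ) (hv : v ∈ polarN C D) :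
    ∃ (β : Cˣ) (a a' : D), (a : C) ≠ 0 ∧ (a' : C) ≠ 0 ∧
      (v : FractionRing C) = algebraMap C (FractionRing C) (β : C) *
        algebraMap C (FractionRing C) (a : C) * (algebraMap C (FractionRing C) (a' : C))⁻¹ := by
  refine Subgroup.closure_induction ?_ ?_ ?_ ?_ hv
  · rintro x (⟨b, hb⟩ | ⟨a, ha⟩)
    · exact ⟨b, 1, 1, one_ne_zero, one_ne_zero, by simp [hb]⟩
    · have ha0 : (a : C) ≠ 0 := by
        intro h
        apply x.ne_zero
        rw [ha, h, map_zero]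
      exact ⟨1, a, 1, ha0, one_ne_zero, by simp [ha]⟩
  · exact ⟨1, 1, 1, one_ne_zero, one_ne_zero, by simp⟩
  · rintro x y _ _ ⟨β₁, a₁, a₁', h₁, h₁', e₁⟩ ⟨β₂, a₂, a₂', h₂, h₂', e₂⟩
    refine ⟨β₁ * β₂, a₁ * a₂, a₁' * a₂', mul_ne_zero h₁ h₂, mul_ne_zero h₁' h₂', ?_⟩
    rw [Units.val_mul, e₁, e₂, Subring.coe_mul, Subring.coe_mul, Units.val_mul,
      map_mul, map_mul, map_mul, mul_inv]
    ring
  · rintro x _ ⟨β, a, a', h, h', e⟩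
    refine ⟨β⁻¹, a', a, h', h, ?_⟩
    have hβ : algebraMap C (FractionRing C) ((β⁻¹ : Cˣ) : C) =
        (algebraMap C (FractionRing C) (β : C))⁻¹ := by
      refine eq_inv_of_mul_eq_one_left ?_
      rw [← map_mul, Units.inv_mul, map_one]
    rw [Units.val_inv_eq_inv_val, e, hβ, mul_inv, mul_inv, inv_inv]
    ring
end Aux

section Aux2
variable {C : Type} [CommRing C] [IsDomain C]

lemma mem_polarN_of_unit_mul (D : Subring C) (x : C)
    (h0 : algebraMap C (FractionRing C) x ≠ 0) (β : Cˣ) (a : D)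
    (hx : x = (β : C) * (a : C)) :
    Units.mk0 (algebraMap C (FractionRing C) x) h0 ∈ polarN C D := by
  have hx0 : x ≠ 0 := by rwa [Ne, IsFractionRing.to_map_eq_zero_iff] at h0
  have ha0 : (a : C) ≠ 0 := by
    intro h
    apply hx0
    rw [hx, h, mul_zero]
  have hb0 : algebraMap C (FractionRing C) ((β : Cˣ) : C) ≠ 0 := by
    rw [Ne, IsFractionRing.to_map_eq_zero_iff]; exact Units.ne_zero β
  have ha0' : algebraMap C (FractionRing C) ((a : D) : C) ≠ 0 := by
    rwa [Ne, IsFractionRing.to_map_eq_zero_iff]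
  have he : Units.mk0 (algebraMap C (FractionRing C) x) h0 =
      Units.mk0 _ hb0 * Units.mk0 _ ha0' := by
    apply Units.ext
    rw [Units.val_mul, Units.val_mk0, Units.val_mk0, Units.val_mk0, ← map_mul, hx]
  rw [he]
  exact mul_mem (Subgroup.subset_closure (Or.inl ⟨β, rfl⟩))
    (Subgroup.subset_closure (Or.inr ⟨a, rfl⟩))
end Aux2

/-- Let `A` be a Noetherian integral `ℝ`-domain in which `ℝ` is
algebraically closed and `B = ℂ ⊗ℝ A` an integral domain (so `B = A ⊕ iA`).
Let `R ⊆ A` be an `ℝ`-subalgebra which is itself a Noetherian domain with `ℝ`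
algebraically closed in it, and let `T = ℂ ⊗ℝ R = R ⊕ iR ⊆ B`.  Let
`M = {ω·a : ω ∈ B*, 0 ≠ a ∈ A}`.  Then `φ : Π(R) → Π(A)`, `[f]_R ↦ [f]_A`, is a
well-defined group homomorphism whose kernel is the subgroup `⟨M ∩ T⟩_R` generated by
the classes of elements of `M ∩ T`. -/
theorem polarGroup_subalgebra_hom (B : Type) [CommRing B] [IsDomain B] [Algebra ℂ B]
    [Algebra ℝ B] [IsScalarTower ℝ ℂ B] (A : Subring B)
    (hRmem : ∀ r : ℝ, algebraMap ℝ B r ∈ A)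
    (hNoeth : IsNoetherianRing ↥A)
    (halgclosed : ∀ a ∈ A, IsAlgebraic ℝ a → ∃ r : ℝ, a = algebraMap ℝ B r)
    (hdecomp : ∀ b : B, ∃! p : ↥A × ↥A,
      b = (p.1 : B) + algebraMap ℂ B Complex.I * (p.2 : B))
    (R : Subring B) (hRA : R ≤ A)
    (hRℝ : ∀ r : ℝ, algebraMap ℝ B r ∈ R)
    (hRNoeth : IsNoetherianRing ↥R)
    (hRalgclosed : ∀ a ∈ R, IsAlgebraic ℝ a → ∃ r : ℝ, a = algebraMap ℝ B r)
    (T : Subring B)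
    (hT : ∀ b : B, b ∈ T ↔ ∃ r₁ ∈ R, ∃ r₂ ∈ R, b = r₁ + algebraMap ℂ B Complex.I * r₂) :
    ∃ φ : ((FractionRing ↥T)ˣ ⧸ polarN ↥T (Subring.comap T.subtype R)) →*
        ((FractionRing B)ˣ ⧸ polarN B A),
      (∀ (f : ↥T) (hf : f ≠ 0),
        φ (polarCls ↥T (Subring.comap T.subtype R) f hf) =
          polarCls B A (f : B) (by simpa using hf)) ∧
      φ.ker = Subgroup.closure
        {x | ∃ (g : ↥T) (hg : g ≠ 0),
          (∃ ω : Bˣ, ∃ a ∈ A, a ≠ 0 ∧ (g : B) = (ω : B) * a) ∧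
          x = polarCls ↥T (Subring.comap T.subtype R) g hg} := by
  classical
  have hinj : Function.Injective ⇑T.subtype := Subtype.coe_injective
  have hD : ∀ d : (Subring.comap T.subtype R), T.subtype (d : ↥T) ∈ A :=
    fun d => hRA d.2
  refine ⟨polarMap T.subtype hinj (Subring.comap T.subtype R) A hD, ?_, ?_⟩
  · intro f hf
    exact polarMap_cls T.subtype hinj _ A hD f hf
  -- the uniqueness helper
  have huniq : ∀ x₁ y₁ x₂ y₂ : B, x₁ ∈ A → y₁ ∈ A → x₂ ∈ A → y₂ ∈ A →
      x₁ + algebraMap ℂ B Complex.I * y₁ = x₂ + algebraMap ℂ B Complex.I * y₂ →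
      x₁ = x₂ ∧ y₁ = y₂ := by
    intro x₁ y₁ x₂ y₂ hx₁ hy₁ hx₂ hy₂ h
    obtain ⟨p, -, hup⟩ := hdecomp (x₁ + algebraMap ℂ B Complex.I * y₁)
    have h1 := hup (⟨x₁, hx₁⟩, ⟨y₁, hy₁⟩) rfl
    have h2 := hup (⟨x₂, hx₂⟩, ⟨y₂, hy₂⟩) h
    have h3 : ((⟨x₁, hx₁⟩, ⟨y₁, hy₁⟩) : ↥A × ↥A) = (⟨x₂, hx₂⟩, ⟨y₂, hy₂⟩) :=
      h1.trans h2.symm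
    exact ⟨congrArg (fun q : ↥A × ↥A => (q.1 : B)) h3,
      congrArg (fun q : ↥A × ↥A => (q.2 : B)) h3⟩
  have hi2 : algebraMap ℂ B Complex.I * algebraMap ℂ B Complex.I = -1 := by
    rw [← map_mul, Complex.I_mul_I, map_neg, map_one]
  apply le_antisymm
  · -- ker ≤ closure
    intro x hx
    obtain ⟨u, rfl⟩ := QuotientGroup.mk'_surjective
      (polarN ↥T (Subring.comap T.subtype R)) x
    have hu1 : Units.map (fracLift T.subtype hinj).toMonoidHom u ∈ polarN B A := by
      rw [MonoidHom.mem_ker] at hx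
      unfold polarMap at hx
      rw [QuotientGroup.mk'_apply, QuotientGroup.lift_mk, MonoidHom.comp_apply,
        QuotientGroup.mk'_apply, QuotientGroup.eq_one_iff] at hx
      exact hx
    obtain ⟨β, a, a', ha, ha', heq⟩ := polarN_mem_char A _ hu1
    simp only [Units.coe_map, RingHom.toMonoidHom_eq_coe, MonoidHom.coe_coe] at heq
    -- write u = f / g
    obtain ⟨⟨f, gden⟩, hfg⟩ := IsLocalization.mk'_surjective (nonZeroDivisors ↥T)
      ((u : (FractionRing ↥T)ˣ) : FractionRing ↥T)
    have hrel : ((u : (FractionRing ↥T)ˣ) : FractionRing ↥T) *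
        algebraMap ↥T (FractionRing ↥T) ((gden : ↥T)) =
        algebraMap ↥T (FractionRing ↥T) f := by
      rw [← hfg]; exact IsLocalization.mk'_spec _ f gden
    set g : ↥T := (gden : ↥T) with hgdef
    have hg0 : g ≠ 0 := nonZeroDivisors.coe_ne_zero gden
    have hιg0 : algebraMap ↥T (FractionRing ↥T) g ≠ 0 := by
      rwa [Ne, IsFractionRing.to_map_eq_zero_iff]
    have hf0 : f ≠ 0 := by
      intro h
      rw [h, map_zero] at hrel
      exact mul_ne_zero (Units.ne_zero _) hιg0 hrel
    have hιf0 : algebraMap ↥T (FractionRing ↥T) f ≠ 0 := by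
      rwa [Ne, IsFractionRing.to_map_eq_zero_iff]
    -- conjugate of g
    obtain ⟨r₁, hr₁, r₂, hr₂, hgdec⟩ := (hT (g : B)).mp g.2
    have hg'T : r₁ - algebraMap ℂ B Complex.I * r₂ ∈ T :=
      (hT _).mpr ⟨r₁, hr₁, -r₂, R.neg_mem hr₂, by ring⟩
    set gc : ↥T := ⟨r₁ - algebraMap ℂ B Complex.I * r₂, hg'T⟩ with hgcdef
    have hmulval : (g : B) * (gc : B) = r₁ * r₁ + r₂ * r₂ := by
      rw [hgdec]
      show (r₁ + algebraMap ℂ B Complex.I * r₂) *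
        (r₁ - algebraMap ℂ B Complex.I * r₂) = _
      linear_combination (-(r₂ * r₂)) * hi2
    have hmulR : (g : B) * (gc : B) ∈ R := by
      rw [hmulval]; exact R.add_mem (R.mul_mem hr₁ hr₁) (R.mul_mem hr₂ hr₂)
    have hgc0 : gc ≠ 0 := by
      intro h
      have h0 : r₁ - algebraMap ℂ B Complex.I * r₂ = 0 := by
        have := congrArg (fun t : ↥T => (t : B)) h
        simpa [hgcdef] using this
      have h1 : r₁ + algebraMap ℂ B Complex.I * (-r₂) =
          (0 : B) + algebraMap ℂ B Complex.I * 0 := by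
        rw [mul_neg, mul_zero, add_zero]
        linear_combination h0
      obtain ⟨e1, e2⟩ := huniq r₁ (-r₂) 0 0 (hRA hr₁) (A.neg_mem (hRA hr₂))
        A.zero_mem A.zero_mem h1
      have e2' : r₂ = 0 := neg_eq_zero.mp e2
      have hgz : (g : B) = 0 := by rw [hgdec, e1, e2']; simp
      exact hg0 (Subtype.coe_injective (by simpa using hgz))
    have hfgc0 : f * gc ≠ 0 := mul_ne_zero hf0 hgc0
    -- the element k
    have hkey : algebraMap B (FractionRing B) ((f * gc : ↥T) : B) =
        algebraMap B (FractionRing B) ((β : Bˣ) : B) *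
          algebraMap B (FractionRing B) ((a : ↥A) : B) *
          (algebraMap B (FractionRing B) ((a' : ↥A) : B))⁻¹ *
          (algebraMap B (FractionRing B) ((g : ↥T) : B) *
           algebraMap B (FractionRing B) ((gc : ↥T) : B)) := by
      have e1 := fracLift_algebraMap T.subtype hinj (f * gc)
      have e2 := fracLift_algebraMap T.subtype hinj g
      have e3 := fracLift_algebraMap T.subtype hinj gc
      simp only [Subring.coe_subtype] at e1 e2 e3
      rw [← e1, map_mul, ← hrel, map_mul, map_mul, e2, e3, heq]
      ring
    have ha'ι : algebraMap B (FractionRing B) ((a' : ↥A) : B) ≠ 0 := by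
      rw [Ne, IsFractionRing.to_map_eq_zero_iff]; exact ha'
    have hb1 : algebraMap B (FractionRing B) ((β⁻¹ : Bˣ) : B) *
        algebraMap B (FractionRing B) ((β : Bˣ) : B) = 1 := by
      rw [← map_mul, Units.inv_mul, map_one]
    have hkey2 : algebraMap B (FractionRing B) ((f * gc : ↥T) : B) *
        algebraMap B (FractionRing B) ((a' : ↥A) : B) =
        algebraMap B (FractionRing B) ((β : Bˣ) : B) *
          (algebraMap B (FractionRing B) ((a : ↥A) : B) *
          (algebraMap B (FractionRing B) ((g : ↥T) : B) *
           algebraMap B (FractionRing B) ((gc : ↥T) : B))) := by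
      rw [hkey]
      field_simp
    set k : B := ((β⁻¹ : Bˣ) : B) * ((f * gc : ↥T) : B) with hkdef
    have hka : k * ((a' : ↥A) : B) =
        ((a : ↥A) : B) * (((g : ↥T) : B) * ((gc : ↥T) : B)) := by
      apply IsFractionRing.injective B (FractionRing B)
      simp only [hkdef, map_mul]
      linear_combination algebraMap B (FractionRing B) ((β⁻¹ : Bˣ) : B) * hkey2 +
        (algebraMap B (FractionRing B) ((a : ↥A) : B) *
          (algebraMap B (FractionRing B) ((g : ↥T) : B) *
           algebraMap B (FractionRing B) ((gc : ↥T) : B))) * hb1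
    obtain ⟨p, hp, -⟩ := hdecomp k
    have e0 : (p.1 : B) * ((a' : ↥A) : B) +
        algebraMap ℂ B Complex.I * ((p.2 : B) * ((a' : ↥A) : B)) =
        ((a : ↥A) : B) * (((g : ↥T) : B) * ((gc : ↥T) : B)) +
          algebraMap ℂ B Complex.I * 0 := by
      rw [mul_zero, add_zero, ← hka, hp]; ring
    obtain ⟨-, e2⟩ := huniq _ _ _ _ (A.mul_mem p.1.2 a'.2) (A.mul_mem p.2.2 a'.2)
      (A.mul_mem a.2 (hRA hmulR)) A.zero_mem e0
    have hp2 : (p.2 : B) = 0 := by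
      rcases mul_eq_zero.mp e2 with h | h
      · exact h
      · exact absurd h ha'
    have hkA : k ∈ A := by
      rw [hp, hp2, mul_zero, add_zero]; exact p.1.2
    have hcoene : ((f * gc : ↥T) : B) ≠ 0 := by
      exact_mod_cast hfgc0
    have hk0 : k ≠ 0 := mul_ne_zero (Units.ne_zero _) hcoene
    have hk : ((f * gc : ↥T) : B) = ((β : Bˣ) : B) * k := by
      rw [hkdef, ← mul_assoc, Units.mul_inv, one_mul]
    -- express the class of u
    have hu : u = Units.mk0 (algebraMap ↥T (FractionRing ↥T) f) hιf0 *
        (Units.mk0 (algebraMap ↥T (FractionRing ↥T) g) hιg0)⁻¹ := by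
      apply Units.ext
      rw [Units.val_mul, Units.val_inv_eq_inv_val, Units.val_mk0, Units.val_mk0]
      exact (eq_mul_inv_iff_mul_eq₀ hιg0).mpr hrel
    rw [QuotientGroup.mk'_apply, hu, QuotientGroup.mk_mul, QuotientGroup.mk_inv]
    show polarCls ↥T (Subring.comap T.subtype R) f hf0 *
      (polarCls ↥T (Subring.comap T.subtype R) g hg0)⁻¹ ∈ _
    rw [polarCls_inv (Subring.comap T.subtype R) g gc hg0 hgc0
      (by simpa [Subring.mem_comap] using hmulR), ← polarCls_mul]
    exact Subgroup.subset_closure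
      ⟨f * gc, mul_ne_zero hf0 hgc0, ⟨β, k, hkA, hk0, hk⟩, rfl⟩
  · -- closure ≤ ker
    rw [Subgroup.closure_le]
    rintro x ⟨g0, hg00, ⟨ω, a0, ha0A, ha00, hga⟩, rfl⟩
    rw [SetLike.mem_coe, MonoidHom.mem_ker, polarMap_cls]
    unfold polarCls
    rw [QuotientGroup.eq_one_iff]
    exact mem_polarN_of_unit_mul A _ _ ω ⟨a0, ha0A⟩ (by simpa using hga)
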